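/- The homogeneous steady state equation a - U - U V^2 = 0 together with -mV + (1-bV)UV^2 = 0 with V ≠ 0 admits exactly two solutions with V > 0 if and only if a/m > 2(b + sqrt(1+b^2)), and the V-components are given by V = (a/m ∓ sqrt((a/m)^2 - 4(1 + (a/m)b))) / (2(1 + (a/m)b)). -/

import Mathlib

theorem stmt_0 (a m b : ℝ) (ha : 0 < a) (hm : 0 < m) (hb : 0 < b) :
    (({p : ℝ × ℝ | a - p.1 - p.1 * p.2 ^ 2 = 0 ∧
        -m * p.2 + (1 - b * p.2) * p.1 * p.2 ^ 2 = 0 ∧ 0 < p.2}).ncard = 2 ↔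
      a / m > 2 * (b + Real.sqrt (1 + b ^ 2))) ∧
    ∀ p : ℝ × ℝ, (a - p.1 - p.1 * p.2 ^ 2 = 0 ∧
        -m * p.2 + (1 - b * p.2) * p.1 * p.2 ^ 2 = 0 ∧ 0 < p.2) →
      p.2 = (a / m - Real.sqrt ((a / m) ^ 2 - 4 * (1 + (a / m) * b))) /
              (2 * (1 + (a / m) * b)) ∨
      p.2 = (a / m + Real.sqrt ((a / m) ^ 2 - 4 * (1 + (a / m) * b))) /
              (2 * (1 + (a / m) * b)) := by
  have hm' : m ≠ 0 := ne_of_gt hm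
  set γ := a / m with hγ
  have hγpos : 0 < γ := div_pos ha hm
  set c := 1 + γ * b with hc
  have hcpos : 0 < c := by positivity
  have hcne : c ≠ 0 := ne_of_gt hcpos
  -- key characterization
  have key : ∀ p : ℝ × ℝ,
      (a - p.1 - p.1 * p.2 ^ 2 = 0 ∧ -m * p.2 + (1 - b * p.2) * p.1 * p.2 ^ 2 = 0 ∧ 0 < p.2)
      ↔ (c * p.2 ^ 2 - γ * p.2 + 1 = 0 ∧ 0 < p.2 ∧ p.1 = a / (1 + p.2 ^ 2)) := by
    rintro ⟨U, V⟩
    simp only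
    have h1V : (1 : ℝ) + V ^ 2 ≠ 0 := by positivity
    constructor
    · rintro ⟨h1, h2, hV⟩
      have hVne : V ≠ 0 := ne_of_gt hV
      have hQ : (m + a * b) * V ^ 2 - a * V + m = 0 := by
        have hG : V * ((m + a * b) * V ^ 2 - a * V + m) = 0 := by
          linear_combination (-(1 + V ^ 2)) * h2 - (1 - b * V) * V ^ 2 * h1
        rcases mul_eq_zero.mp hG with h | h
        · exact absurd h hVne
        · exact h
      refine ⟨?_, hV, ?_⟩
      · rw [hc, hγ]; field_simp; linear_combination hQ
      · rw [eq_div_iff h1V]; linear_combination -h1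
    · rintro ⟨hQ, hV, hU⟩
      have hQ' : (m + a * b) * V ^ 2 - a * V + m = 0 := by
        have := hQ
        rw [hc, hγ] at this
        field_simp at this
        linear_combination this
      refine ⟨?_, ?_, hV⟩
      · rw [hU]; field_simp; ring
      · rw [hU]; field_simp; linear_combination (-V) * hQ'
  set D := γ ^ 2 - 4 * c with hD
  set s := Real.sqrt D with hs
  clear_value s D c γ
  -- condition equivalence
  have ht2 : (Real.sqrt (1 + b ^ 2)) ^ 2 = 1 + b ^ 2 := Real.sq_sqrt (by positivity)
  have ht0 : 0 ≤ Real.sqrt (1 + b ^ 2) := Real.sqrt_nonneg _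
  have cond : 0 < D ↔ γ > 2 * (b + Real.sqrt (1 + b ^ 2)) := by
    have htb : b < Real.sqrt (1 + b ^ 2) := by nlinarith [ht2, ht0]
    rw [hD, hc]
    constructor
    · intro h
      by_contra hcon
      push_neg at hcon
      nlinarith [ht2, ht0, mul_nonneg
        (by linarith : (0:ℝ) ≤ 2 * b + 2 * Real.sqrt (1 + b ^ 2) - γ)
        (by linarith : (0:ℝ) ≤ γ - 2 * b + 2 * Real.sqrt (1 + b ^ 2))]
    · intro h
      nlinarith [ht2, ht0, mul_pos
        (by linarith : (0:ℝ) < γ - 2 * b - 2 * Real.sqrt (1 + b ^ 2))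
        (by linarith : (0:ℝ) < γ - 2 * b + 2 * Real.sqrt (1 + b ^ 2))]
  constructor
  · rw [← cond]
    constructor
    · -- ncard = 2 → 0 < D
      intro hcard
      by_contra hDle
      push_neg at hDle
      rcases lt_or_eq_of_le hDle with hDlt | hDeq
      · -- D < 0 : empty set
        have : ({p : ℝ × ℝ | a - p.1 - p.1 * p.2 ^ 2 = 0 ∧
            -m * p.2 + (1 - b * p.2) * p.1 * p.2 ^ 2 = 0 ∧ 0 < p.2}) = ∅ := by
          ext p
          simp only [Set.mem_setOf_eq, Set.mem_empty_iff_false, iff_false]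
          intro hp
          obtain ⟨hQ, hV, hU⟩ := (key p).mp hp
          have hsq : (2 * c * p.2 - γ) ^ 2 = D := by
            rw [hD]; linear_combination 4 * c * hQ
          nlinarith [sq_nonneg (2 * c * p.2 - γ)]
        rw [this, Set.ncard_empty] at hcard
        exact absurd hcard (by norm_num)
      · -- D = 0 : singleton
        set r : ℝ := γ / (2 * c) with hr
        clear_value r
        have hrpos : 0 < r := by rw [hr]; positivity
        have : ({p : ℝ × ℝ | a - p.1 - p.1 * p.2 ^ 2 = 0 ∧
            -m * p.2 + (1 - b * p.2) * p.1 * p.2 ^ 2 = 0 ∧ 0 < p.2}) =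
            {(a / (1 + r ^ 2), r)} := by
          ext p
          simp only [Set.mem_setOf_eq, Set.mem_singleton_iff]
          rw [key p]
          constructor
          · rintro ⟨hQ, hV, hU⟩
            have hsq : (2 * c * p.2 - γ) ^ 2 = D := by
              rw [hD]; linear_combination 4 * c * hQ
            rw [hDeq] at hsq
            have h0 : 2 * c * p.2 - γ = 0 := by
              have := sq_eq_zero_iff.mp hsq
              exact this
            have hp2 : p.2 = r := by rw [hr]; field_simp; linarith
            have : p = (p.1, p.2) := rfl
            rw [this, hp2, hU, hp2]
          · intro hp
            rw [hp]
            refine ⟨?_, hrpos, rfl⟩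
            have hγ2 : γ ^ 2 - 4 * c = 0 := by rw [hD] at hDeq; linarith
            rw [hr]
            field_simp
            nlinarith [hγ2]
        rw [this, Set.ncard_singleton] at hcard
        exact absurd hcard (by norm_num)
    · -- 0 < D → ncard = 2
      intro hDpos
      have hs2 : s ^ 2 = D := by rw [hs]; exact Real.sq_sqrt hDpos.le
      have hspos : 0 < s := by rw [hs]; exact Real.sqrt_pos.mpr hDpos
      have hslt : s < γ := by nlinarith [hs2]
      set r₁ : ℝ := (γ - s) / (2 * c) with hr1
      set r₂ : ℝ := (γ + s) / (2 * c) with hr2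
      clear_value r₁ r₂
      have hr1pos : 0 < r₁ := by
        rw [hr1]; exact div_pos (by linarith) (by linarith)
      have hr2pos : 0 < r₂ := by
        rw [hr2]; exact div_pos (by linarith) (by linarith)
      have hs2' : s ^ 2 = γ ^ 2 - 4 * c := by rw [hs2, hD]
      have hroot1 : c * r₁ ^ 2 - γ * r₁ + 1 = 0 := by
        rw [hr1]; field_simp; linear_combination hs2'
      have hroot2 : c * r₂ ^ 2 - γ * r₂ + 1 = 0 := by
        rw [hr2]; field_simp; linear_combination hs2'
      have hSeq : ({p : ℝ × ℝ | a - p.1 - p.1 * p.2 ^ 2 = 0 ∧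
          -m * p.2 + (1 - b * p.2) * p.1 * p.2 ^ 2 = 0 ∧ 0 < p.2}) =
          {(a / (1 + r₁ ^ 2), r₁), (a / (1 + r₂ ^ 2), r₂)} := by
        ext p
        simp only [Set.mem_setOf_eq, Set.mem_insert_iff, Set.mem_singleton_iff]
        rw [key p]
        constructor
        · rintro ⟨hQ, hV, hU⟩
          have hsq : (2 * c * p.2 - γ) ^ 2 = D := by
            rw [hD]; linear_combination 4 * c * hQ
          have habs : s = |2 * c * p.2 - γ| := by
            rw [hs, ← hsq, Real.sqrt_sq_eq_abs]
          have : p = (p.1, p.2) := rfl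
          rcases abs_cases (2 * c * p.2 - γ) with ⟨he, _⟩ | ⟨he, _⟩
          · right
            have hp2 : p.2 = r₂ := by rw [hr2]; rw [he] at habs; field_simp; linarith
            rw [this, hp2, hU, hp2]
          · left
            have hp2 : p.2 = r₁ := by rw [hr1]; rw [he] at habs; field_simp; linarith
            rw [this, hp2, hU, hp2]
        · rintro (hp | hp) <;> rw [hp]
          · exact ⟨hroot1, hr1pos, rfl⟩
          · exact ⟨hroot2, hr2pos, rfl⟩
      rw [hSeq]
      apply Set.ncard_pair
      intro hco
      have : r₁ = r₂ := congrArg Prod.snd hco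
      rw [hr1, hr2] at this
      field_simp at this
      linarith
  · -- second part
    intro p hp
    obtain ⟨hQ, hV, hU⟩ := (key p).mp hp
    have hsq : (2 * c * p.2 - γ) ^ 2 = D := by
      rw [hD]; linear_combination 4 * c * hQ
    have habs : s = |2 * c * p.2 - γ| := by
      rw [hs, ← hsq, Real.sqrt_sq_eq_abs]
    rcases abs_cases (2 * c * p.2 - γ) with ⟨he, _⟩ | ⟨he, _⟩
    · right; rw [he] at habs; field_simp; linarith
    · left; rw [he] at habs; field_simp; linarith
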